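/- Let v be a vertex at which exactly one loop α is based, let C = {z ∈ Z : for every i there is a finite path from r(z_i) to v}, and let F be the closure of C in X. Then F is invariant under tail equivalence, and every x ∈ F with s(x) = v equals the infinite path γ = ααα⋯. -/

import Mathlib

namespace GraphCstar

/-- A directed graph: vertices, edges, source and range maps. -/
structure Graph where
  V : Type
  Ed : Type
  src : Ed → V
  rng : Ed → V

variable (G : Graph)

/-- Validity of a list of edges as a path starting at vertex `v`. -/
def Valid : G.V → List G.Ed → Prop
  | _, [] => True
  | v, e :: l => G.src e = v ∧ Valid (G.rng e) l

/-- Terminal vertex of a list of edges starting at `v`. -/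
def rngTo : G.V → List G.Ed → G.V
  | v, [] => v
  | _, e :: l => rngTo (G.rng e) l

theorem valid_append (l₁ l₂ : List G.Ed) (v : G.V) :
    Valid G v (l₁ ++ l₂) ↔ Valid G v l₁ ∧ Valid G (rngTo G v l₁) l₂ := by
  induction l₁ generalizing v with
  | nil => simp [Valid, rngTo]
  | cons e l ih => simp [Valid, rngTo, ih, and_assoc]

theorem rngTo_append (l₁ l₂ : List G.Ed) (v : G.V) :
    rngTo G v (l₁ ++ l₂) = rngTo G (rngTo G v l₁) l₂ := by
  induction l₁ generalizing v with
  | nil => rfl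
  | cons e l ih => simp [rngTo, ih]

theorem valid_drop {v : G.V} {l : List G.Ed} (n : ℕ) (h : Valid G v l) :
    Valid G (rngTo G v (l.take n)) (l.drop n) := by
  have h' : Valid G v (l.take n ++ l.drop n) := by
    rw [List.take_append_drop]; exact h
  exact ((valid_append G _ _ _).mp h').2

/-- A finite path in the graph `G`; vertices are the paths of length `0`. -/
structure FinPath where
  start : G.V
  edges : List G.Ed
  valid : Valid G start edges

namespace FinPath

variable {G}

/-- The terminal vertex (range) of a finite path. -/
def rngF (α : FinPath G) : G.V := rngTo G α.start α.edges

/-- The length of a finite path. -/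
def len (α : FinPath G) : ℕ := α.edges.length

/-- The finite path of length `0` at the vertex `v`. -/
def vp (v : G.V) : FinPath G := ⟨v, [], trivial⟩

/-- The finite path consisting of the single edge `e`. -/
def ep (e : G.Ed) : FinPath G := ⟨G.src e, [e], ⟨rfl, trivial⟩⟩

/-- Concatenation of finite paths. -/
def concat (α β : FinPath G) (h : β.start = α.rngF) : FinPath G :=
  ⟨α.start, α.edges ++ β.edges,
    (valid_append G _ _ _).mpr
      ⟨α.valid, by
        show Valid G α.rngF β.edges
        rw [← h]; exact β.valid⟩⟩

theorem rngF_concat (α β : FinPath G) (h : β.start = α.rngF) :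
    (α.concat β h).rngF = β.rngF := by
  show rngTo G α.start (α.edges ++ β.edges) = _
  rw [rngTo_append]
  show rngTo G α.rngF β.edges = _
  rw [← h]; rfl

end FinPath

/-- `α` is an initial segment of `β`. -/
def IsPref (α β : FinPath G) : Prop := α.start = β.start ∧ α.edges <+: β.edges

/-- The "remainder" path: if `α` is an initial segment of `β`, the path `μ` with
`β = αμ` (for other inputs the value is junk). -/
def diff (α β : FinPath G) : FinPath G :=
  ⟨rngTo G β.start (β.edges.take α.edges.length),
    β.edges.drop α.edges.length, valid_drop G _ β.valid⟩

open Classical in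
/-- Totalized concatenation of finite paths (junk value when endpoints do not match). -/
noncomputable def catP (α β : FinPath G) : FinPath G :=
  if h : β.start = α.rngF then α.concat β h else α

open Classical in
/-- The product on `T = {(α,β) ∈ Y × Y : r(α) = r(β)} ∪ {z}`, with `z` encoded as `none`. -/
noncomputable def mulT :
    Option (FinPath G × FinPath G) → Option (FinPath G × FinPath G) →
      Option (FinPath G × FinPath G)
  | none, _ => none
  | _, none => none
  | some (α₁, β₁), some (α₂, β₂) =>
    if IsPref G β₁ α₂ then some (catP G α₁ (diff G β₁ α₂), β₂)
    else if IsPref G α₂ β₁ then some (α₁, catP G β₂ (diff G α₂ β₁))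
    else none

/-- The involution on `T`. -/
def starT :
    Option (FinPath G × FinPath G) → Option (FinPath G × FinPath G)
  | none => none
  | some (α, β) => some (β, α)

/-- The subset of `Option (FinPath G × FinPath G)` corresponding to
`T = {(α,β) : r(α) = r(β)} ∪ {z}`. -/
def TsetT : Set (Option (FinPath G × FinPath G)) :=
  {t | ∀ α β : FinPath G, t = some (α, β) → α.rngF = β.rngF}

/-- An infinite path in the graph `G`. -/
structure InfPath where
  seq : ℕ → G.Ed
  valid : ∀ i, G.src (seq (i + 1)) = G.rng (seq i)

/-- The initial vertex of an infinite path. -/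
def InfPath.start {G : Graph} (z : InfPath G) : G.V := G.src (z.seq 0)

/-- Prepending an edge to an infinite path. -/
def consInf (e : G.Ed) (z : InfPath G) (h : z.start = G.rng e) : InfPath G where
  seq := fun n =>
    match n with
    | 0 => e
    | m + 1 => z.seq m
  valid := fun i =>
    match i with
    | 0 => h
    | m + 1 => z.valid m

/-- Prepending a finite edge list to an infinite path (with the starting vertex recorded). -/
def appendInfAux :
    (l : List G.Ed) → (v : G.V) → Valid G v l → (z : InfPath G) →
      z.start = rngTo G v l → {w : InfPath G // w.start = v}
  | [], _, _, z, h => ⟨z, h⟩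
  | e :: l, v, hv, z, h =>
    let w := appendInfAux l (G.rng e) hv.2 z h
    ⟨consInf G e w.1 w.2, hv.1⟩

/-- Concatenation of a finite path with an infinite path. -/
def FinPath.concatInf {G : Graph} (α : FinPath G) (z : InfPath G)
    (h : z.start = α.rngF) : InfPath G :=
  (appendInfAux G α.edges α.start α.valid z h).1

/-- The path space `Y ∪ Z` of all finite and infinite paths. -/
def PathSp := FinPath G ⊕ InfPath G

/-- The initial vertex of a (finite or infinite) path. -/
def startOf : PathSp G → G.V
  | .inl α => α.start
  | .inr z => z.start

/-- The length of a path, in `ℕ∞`. -/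
def lenOf : PathSp G → ℕ∞
  | .inl α => (α.edges.length : ℕ∞)
  | .inr _ => ⊤

/-- The `i`-th edge (0-indexed) of a path, if it exists. -/
def nthEdge : PathSp G → ℕ → Option G.Ed
  | .inl α, i => α.edges[i]?
  | .inr z, i => some (z.seq i)

/-- `x = αγ` for some (finite or infinite, possibly length `0`) path `γ`;
that is, `α` is an initial segment of `x`, i.e. `x ∈ D_α`. -/
def Ext (α : FinPath G) (x : PathSp G) : Prop :=
  (∃ (β : FinPath G) (h : β.start = α.rngF), x = .inl (α.concat β h)) ∨
  (∃ (w : InfPath G) (h : w.start = α.rngF), x = .inr (α.concatInf w h))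

/-- The basic set `D_α ⊆ Y ∪ Z`. -/
def Dset (α : FinPath G) : Set (PathSp G) := {x | Ext G α x}

/-- The topology on the path space, generated by the sets `D_α` and their complements. -/
def pathTop : TopologicalSpace (PathSp G) :=
  .generateFrom (Set.range (Dset G) ∪ Set.range fun α => (Dset G α)ᶜ)

/-- The vertex `v` emits infinitely many edges. -/
def Vinf (v : G.V) : Prop := {e | G.src e = v}.Infinite

/-- Membership in `X = Y_∞ ∪ Z`. -/
def memX : PathSp G → Prop
  | .inl α => Vinf G α.rngF
  | .inr _ => True

/-- The set `X = Y_∞ ∪ Z`. -/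
def Xset : Set (PathSp G) := {x | memX G x}

/-- Tail equivalence of paths: `x = αγ` and `y = βγ` for finite paths `α, β`
and a common (finite or infinite) path `γ`. -/
def TailEq (x y : PathSp G) : Prop :=
  (∃ (α β γ : FinPath G) (h₁ : γ.start = α.rngF) (h₂ : γ.start = β.rngF),
      x = .inl (α.concat γ h₁) ∧ y = .inl (β.concat γ h₂)) ∨
  (∃ (α β : FinPath G) (w : InfPath G) (h₁ : w.start = α.rngF)
      (h₂ : w.start = β.rngF),
      x = .inr (α.concatInf w h₁) ∧ y = .inr (β.concatInf w h₂))

/-- A subset of the path space is invariant (a union of tail-equivalence classes). -/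
def InvariantS (F : Set (PathSp G)) : Prop :=
  ∀ x ∈ F, ∀ y, TailEq G x y → y ∈ F

/-- Membership `(x, k, y) ∈ G` for the path groupoid: `x = αγ`, `y = βγ` and
`k = l(α) - l(β)`. -/
def InG (x : PathSp G) (k : ℤ) (y : PathSp G) : Prop :=
  (∃ (α β γ : FinPath G) (h₁ : γ.start = α.rngF) (h₂ : γ.start = β.rngF),
      x = .inl (α.concat γ h₁) ∧ y = .inl (β.concat γ h₂) ∧
        k = (α.len : ℤ) - (β.len : ℤ)) ∨
  (∃ (α β : FinPath G) (w : InfPath G) (h₁ : w.start = α.rngF)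
      (h₂ : w.start = β.rngF),
      x = .inr (α.concatInf w h₁) ∧ y = .inr (β.concatInf w h₂) ∧
        k = (α.len : ℤ) - (β.len : ℤ))

/-- There is a finite path from `u` to `w`. -/
def Reach (u w : G.V) : Prop := ∃ β : FinPath G, β.start = u ∧ β.rngF = w

/-- A loop based at the vertex `v`. -/
def LoopAt (v : G.V) (α : FinPath G) : Prop :=
  α.edges ≠ [] ∧ α.start = v ∧ α.rngF = v ∧
    ∀ i e, i + 1 < α.edges.length → α.edges[i]? = some e → G.rng e ≠ v

/-- Condition (K): no vertex has exactly one loop based at it. -/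
def CondK : Prop := ¬ ∃ v : G.V, ∃! α : FinPath G, LoopAt G v α

/-- A point of the path space has trivial isotropy if whenever `x = αγ = βγ`
then `l(α) = l(β)`. -/
def TrivIso (x : PathSp G) : Prop :=
  ∀ α β : FinPath G,
    ((∃ (γ : FinPath G) (h₁ : γ.start = α.rngF) (h₂ : γ.start = β.rngF),
        x = .inl (α.concat γ h₁) ∧ x = .inl (β.concat γ h₂)) ∨
     (∃ (w : InfPath G) (h₁ : w.start = α.rngF) (h₂ : w.start = β.rngF),
        x = .inr (α.concatInf w h₁) ∧ x = .inr (β.concatInf w h₂))) →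
    α.len = β.len


/-- The set `C = {z ∈ Z : for every i there is a finite path from r(z_i) to v}`. -/
def Cset (v : G.V) : Set (PathSp G) :=
  {x | ∃ z : InfPath G, x = .inr z ∧ ∀ i : ℕ, Reach G (G.rng (z.seq i)) v}

/-! ### Auxiliary machinery for Statement 15 -/

variable {G}

theorem FinPath.ext' {α β : FinPath G} (h1 : α.start = β.start)
    (h2 : α.edges = β.edges) : α = β := by
  cases α; cases β; cases h1; cases h2; rfl

theorem InfPath.ext' {z w : InfPath G} (h : ∀ i, z.seq i = w.seq i) : z = w := by
  cases z; cases w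
  simp only [InfPath.mk.injEq]
  exact funext h

theorem valid_head {v : G.V} {l : List G.Ed} (hv : Valid G v l) (h : 0 < l.length) :
    G.src (l[0]'h) = v := by
  cases l with
  | nil => simp at h
  | cons e l => exact hv.1

theorem rngTo_take_succ {v : G.V} (l : List G.Ed) (i : ℕ) (h : i < l.length) :
    rngTo G v (l.take (i + 1)) = G.rng (l[i]'h) := by
  rw [List.take_succ, List.getElem?_eq_getElem h]
  simp only [Option.toList_some]
  rw [rngTo_append]
  rfl

theorem valid_get {v : G.V} {l : List G.Ed} (hv : Valid G v l) (j : ℕ)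
    (h : j + 1 < l.length) :
    G.src (l[j + 1]'h) = G.rng (l[j]'(by omega)) := by
  induction l generalizing v j with
  | nil => simp at h
  | cons e l ih =>
    cases j with
    | zero =>
      have h0 : 0 < l.length := by
        simp only [List.length_cons] at h; omega
      simpa using valid_head hv.2 h0
    | succ j =>
      have h' : j + 1 < l.length := by
        simp only [List.length_cons] at h; omega
      simpa using ih hv.2 j h'

/-- The finite segment `z_{a+1} ⋯ z_{a+b}` (edges `z.seq a, …, z.seq (a+b-1)`). -/
def seg (z : InfPath G) (a b : ℕ) : List G.Ed :=
  (List.range b).map fun j => z.seq (a + j)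

theorem seg_length (z : InfPath G) (a b : ℕ) : (seg z a b).length = b := by
  simp [seg]

theorem seg_getElem? (z : InfPath G) (a b i : ℕ) (h : i < b) :
    (seg z a b)[i]? = some (z.seq (a + i)) := by
  simp [seg, List.getElem?_map, List.getElem?_range h]

theorem seg_spec (z : InfPath G) (a : ℕ) : ∀ b,
    Valid G (G.src (z.seq a)) (seg z a b) ∧
      rngTo G (G.src (z.seq a)) (seg z a b) = G.src (z.seq (a + b))
  | 0 => ⟨trivial, rfl⟩
  | b + 1 => by
    have ih := seg_spec z a b
    have hseg : seg z a (b + 1) = seg z a b ++ [z.seq (a + b)] := by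
      simp [seg, List.range_succ]
    constructor
    · rw [hseg, valid_append]
      exact ⟨ih.1, by rw [ih.2]; exact ⟨rfl, trivial⟩⟩
    · rw [hseg, rngTo_append, ih.2]
      show G.rng (z.seq (a + b)) = G.src (z.seq (a + (b + 1)))
      rw [show a + (b + 1) = (a + b) + 1 from rfl]
      exact (z.valid (a + b)).symm

theorem appendInfAux_seq_ge (l : List G.Ed) : ∀ (w : G.V) (hv : Valid G w l)
    (z : InfPath G) (h : z.start = rngTo G w l) (i : ℕ),
    ((appendInfAux G l w hv z h).1).seq (l.length + i) = z.seq i := by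
  induction l with
  | nil =>
    intro _ _ _ _ i
    simp only [List.length_nil, Nat.zero_add]
    rfl
  | cons e l ih =>
    intro w hv z h i
    have hidx : (e :: l).length + i = (l.length + i) + 1 := by
      rw [List.length_cons]; omega
    rw [hidx]
    exact ih (G.rng e) hv.2 z h i

theorem appendInfAux_seq_lt (l : List G.Ed) : ∀ (w : G.V) (hv : Valid G w l)
    (z : InfPath G) (h : z.start = rngTo G w l) (i : ℕ) (hi : i < l.length),
    ((appendInfAux G l w hv z h).1).seq i = l[i]'hi := by
  induction l with
  | nil => intro _ _ _ _ i hi; simp at hi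
  | cons e l ih =>
    intro w hv z h i hi
    cases i with
    | zero => rfl
    | succ i =>
      have hi' : i < l.length := by
        simp only [List.length_cons] at hi; omega
      have := ih (G.rng e) hv.2 z h i hi'
      exact this

theorem concatInf_start (α : FinPath G) (z : InfPath G) (h : z.start = α.rngF) :
    (α.concatInf z h).start = α.start :=
  (appendInfAux G α.edges α.start α.valid z h).2

theorem concatInf_seq_lt (α : FinPath G) (z : InfPath G) (h : z.start = α.rngF)
    (i : ℕ) (hi : i < α.edges.length) :
    (α.concatInf z h).seq i = α.edges[i]'hi :=
  appendInfAux_seq_lt α.edges α.start α.valid z h i hi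

theorem concatInf_seq_ge (α : FinPath G) (z : InfPath G) (h : z.start = α.rngF)
    (i : ℕ) :
    (α.concatInf z h).seq (α.edges.length + i) = z.seq i :=
  appendInfAux_seq_ge α.edges α.start α.valid z h i

/-- Concrete description of `x ∈ D_α`. -/
def Pref (α : FinPath G) (x : PathSp G) : Prop :=
  startOf G x = α.start ∧ ∀ (i : ℕ) (e : G.Ed), α.edges[i]? = some e →
    nthEdge G x i = some e

theorem getElem?_lt {l : List G.Ed} {i : ℕ} {e : G.Ed} (h : l[i]? = some e) :
    i < l.length := by
  by_contra hc
  rw [List.getElem?_eq_none (by omega)] at h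
  cases h

theorem ext_iff_pref (α : FinPath G) (x : PathSp G) : Ext G α x ↔ Pref α x := by
  constructor
  · rintro (⟨β, h, rfl⟩ | ⟨w, h, rfl⟩)
    · refine ⟨rfl, fun i e he => ?_⟩
      have hi : i < α.edges.length := getElem?_lt he
      show (α.edges ++ β.edges)[i]? = some e
      rw [List.getElem?_append_left hi]
      exact he
    · refine ⟨concatInf_start α w h, fun i e he => ?_⟩
      have hi : i < α.edges.length := getElem?_lt he
      show some ((α.concatInf w h).seq i) = some e
      rw [concatInf_seq_lt α w h i hi, ← List.getElem?_eq_getElem hi]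
      exact he
  · intro hp
    cases x with
    | inl β =>
      have hs : β.start = α.start := hp.1
      have htake : β.edges.take α.edges.length = α.edges := by
        apply List.ext_getElem?
        intro i
        rw [List.getElem?_take]
        split
        · next hi =>
          have hαi : α.edges[i]? = some (α.edges[i]'hi) := List.getElem?_eq_getElem hi
          have hβi : β.edges[i]? = some (α.edges[i]'hi) := hp.2 i _ hαi
          rw [hβi, hαi]
        · next hi =>
          rw [List.getElem?_eq_none (by omega)]
      left
      have hd : (diff G α β).start = α.rngF := by
        show rngTo G β.start (β.edges.take α.edges.length) = α.rngF
        rw [htake, hs]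
        rfl
      refine ⟨diff G α β, hd, ?_⟩
      apply congrArg Sum.inl
      refine FinPath.ext' ?_ ?_
      · show β.start = α.start
        exact hs
      show β.edges = α.edges ++ β.edges.drop α.edges.length
      conv_lhs => rw [← List.take_append_drop α.edges.length β.edges]
      rw [htake]
    | inr z =>
      have hs : z.start = α.start := hp.1
      have heseq : ∀ (i : ℕ) (hi : i < α.edges.length), z.seq i = α.edges[i]'hi := by
        intro i hi
        have := hp.2 i _ (List.getElem?_eq_getElem hi)
        exact Option.some.inj this
      have hseg : seg z 0 α.edges.length = α.edges := by
        apply List.ext_getElem?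
        intro i
        rcases lt_or_ge i α.edges.length with hi | hi
        · rw [seg_getElem? z 0 _ i hi, List.getElem?_eq_getElem hi]
          simp [heseq i hi]
        · rw [List.getElem?_eq_none hi, List.getElem?_eq_none (by rw [seg_length]; omega)]
      have hsrc : G.src (z.seq α.edges.length) = α.rngF := by
        have h2 := (seg_spec z 0 α.edges.length).2
        rw [hseg] at h2
        have h3 : G.src (z.seq 0) = α.start := hs
        rw [h3] at h2
        rw [show (0 : ℕ) + α.edges.length = α.edges.length from by omega] at h2
        exact h2.symm
      right
      refine ⟨⟨fun i => z.seq (α.edges.length + i), fun i => z.valid _⟩, hsrc, ?_⟩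
      apply congrArg Sum.inr
      apply InfPath.ext'
      intro i
      rcases lt_or_ge i α.edges.length with hi | hi
      · refine Eq.trans ?_ (concatInf_seq_lt α _ _ i hi).symm
        exact heseq i hi
      · obtain ⟨j, rfl⟩ : ∃ j, i = α.edges.length + j := ⟨i - α.edges.length, by omega⟩
        exact (concatInf_seq_ge α ⟨fun i => z.seq (α.edges.length + i), fun i => z.valid _⟩ hsrc j).symm

theorem pref_refl (α : FinPath G) : Pref α (Sum.inl α) :=
  ⟨rfl, fun _ _ he => he⟩

theorem pref_trans {a b : FinPath G} {x : PathSp G} (h1 : Pref a (Sum.inl b))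
    (h2 : Pref b x) : Pref a x :=
  ⟨h2.1.trans h1.1, fun i e he => h2.2 i e (h1.2 i e he)⟩

theorem pref_comp {a b : FinPath G} {x : PathSp G} (h1 : Pref a x) (h2 : Pref b x)
    (hl : a.edges.length ≤ b.edges.length) : Pref a (Sum.inl b) := by
  refine ⟨h2.1.symm.trans h1.1, fun i e he => ?_⟩
  have hi : i < a.edges.length := getElem?_lt he
  have hib : i < b.edges.length := lt_of_lt_of_le hi hl
  have hb := h2.2 i _ (List.getElem?_eq_getElem hib)
  have ha := h1.2 i e he
  show b.edges[i]? = some e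
  rw [List.getElem?_eq_getElem hib]
  rw [ha] at hb
  exact hb.symm

theorem pref_src {p : FinPath G} {z : InfPath G} (h : Pref p (Sum.inr z)) :
    G.src (z.seq p.edges.length) = p.rngF := by
  have hs : z.start = p.start := h.1
  have hseg : seg z 0 p.edges.length = p.edges := by
    apply List.ext_getElem?
    intro i
    rcases lt_or_ge i p.edges.length with hi | hi
    · rw [seg_getElem? z 0 _ i hi, List.getElem?_eq_getElem hi]
      have := h.2 i _ (List.getElem?_eq_getElem hi)
      have := Option.some.inj this
      simp [this]
    · rw [List.getElem?_eq_none hi, List.getElem?_eq_none (by rw [seg_length]; omega)]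
  have h2 := (seg_spec z 0 p.edges.length).2
  rw [hseg] at h2
  have h3 : G.src (z.seq 0) = p.start := hs
  rw [h3] at h2
  rw [show (0 : ℕ) + p.edges.length = p.edges.length from by omega] at h2
  exact h2.symm

theorem take_pref {q ν : FinPath G} (h : Pref q (Sum.inl ν)) :
    ν.edges.take q.edges.length = q.edges := by
  apply List.ext_getElem?
  intro i
  rw [List.getElem?_take]
  split
  · next hi =>
    have hq : q.edges[i]? = some (q.edges[i]'hi) := List.getElem?_eq_getElem hi
    have hν : ν.edges[i]? = some (q.edges[i]'hi) := h.2 i _ hq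
    rw [hν, hq]
  · next hi =>
    rw [List.getElem?_eq_none (by omega)]

/-- The finite path `wPref z k` = first `k` edges of the infinite path `z`. -/
def wPref (z : InfPath G) (k : ℕ) : FinPath G :=
  ⟨z.start, seg z 0 k, (seg_spec z 0 k).1⟩

theorem wPref_len (z : InfPath G) (k : ℕ) : (wPref z k).edges.length = k :=
  seg_length z 0 k

theorem pref_wPref (z : InfPath G) (k : ℕ) : Pref (wPref z k) (Sum.inr z) := by
  refine ⟨rfl, fun i e he => ?_⟩
  have hi : i < k := by
    have := getElem?_lt he
    rwa [wPref_len] at this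
  rw [show (wPref z k).edges = seg z 0 k from rfl, seg_getElem? z 0 k i hi] at he
  show some (z.seq i) = some e
  simpa using he

theorem wPref_rngF (z : InfPath G) (k : ℕ) :
    (wPref z k).rngF = G.src (z.seq k) := by
  have h2 := (seg_spec z 0 k).2
  show rngTo G z.start (seg z 0 k) = _
  rw [show z.start = G.src (z.seq 0) from rfl, h2]
  simp

/-- The basic-ish open sets `D_δ ∩ ⋂_{ν ∈ T} D_νᶜ`. -/
def Sset (δ : FinPath G) (T : List (FinPath G)) : Set (PathSp G) :=
  {x | Pref δ x ∧ ∀ ν ∈ T, ¬ Pref ν x}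

theorem dset_eq (α : FinPath G) : Dset G α = {x | Pref α x} :=
  Set.ext fun x => ext_iff_pref α x

theorem sset_open (δ : FinPath G) (T : List (FinPath G)) :
    TopologicalSpace.GenerateOpen
      (Set.range (Dset G) ∪ Set.range fun α => (Dset G α)ᶜ) (Sset δ T) := by
  induction T with
  | nil =>
    have h : Sset δ [] = Dset G δ := by
      rw [dset_eq]; ext x; simp [Sset]
    rw [h]
    exact .basic _ (Or.inl ⟨δ, rfl⟩)
  | cons ν T ih =>
    have h : Sset δ (ν :: T) = Sset δ T ∩ (Dset G ν)ᶜ := by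
      ext x
      simp only [Sset, Set.mem_inter_iff, Set.mem_setOf_eq, Set.mem_compl_iff, dset_eq,
        List.mem_cons]
      constructor
      · rintro ⟨h1, h2⟩
        exact ⟨⟨h1, fun μ hμ => h2 μ (Or.inr hμ)⟩, h2 ν (Or.inl rfl)⟩
      · rintro ⟨⟨h1, h2⟩, h3⟩
        refine ⟨h1, fun μ hμ => ?_⟩
        rcases hμ with rfl | hμ
        · exact h3
        · exact h2 μ hμ
    rw [h]
    exact .inter _ _ ih (.basic _ (Or.inr ⟨ν, rfl⟩))

theorem pref_vp (x : PathSp G) : Pref (FinPath.vp (startOf G x)) x := by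
  refine ⟨rfl, fun i e he => ?_⟩
  have : (FinPath.vp (startOf G x)).edges = [] := rfl
  rw [this] at he
  simp at he

theorem nhds_basis {x : PathSp G} {U : Set (PathSp G)}
    (hU : TopologicalSpace.GenerateOpen
      (Set.range (Dset G) ∪ Set.range fun α => (Dset G α)ᶜ) U) :
    x ∈ U → ∃ (δ : FinPath G) (T : List (FinPath G)),
      Pref δ x ∧ (∀ ν ∈ T, ¬ Pref ν x) ∧ Sset δ T ⊆ U := by
  induction hU with
  | basic S hS =>
    intro hx
    rcases hS with ⟨μ, rfl⟩ | ⟨μ, rfl⟩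
    · exact ⟨μ, [], (ext_iff_pref μ x).mp hx, by simp,
        fun y hy => (ext_iff_pref μ y).mpr hy.1⟩
    · refine ⟨FinPath.vp (startOf G x), [μ], pref_vp x, ?_, ?_⟩
      · intro ν hν
        rcases List.mem_singleton.mp hν with rfl
        intro hp
        exact hx ((ext_iff_pref ν x).mpr hp)
      · intro y hy hD
        exact hy.2 μ (List.mem_singleton.mpr rfl) ((ext_iff_pref μ y).mp hD)
  | univ =>
    intro _
    exact ⟨FinPath.vp (startOf G x), [], pref_vp x, by simp, by simp⟩
  | inter U V hUo hVo ihU ihV =>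
    intro hx
    obtain ⟨δ₁, T₁, h₁, hT₁, hs₁⟩ := ihU hx.1
    obtain ⟨δ₂, T₂, h₂, hT₂, hs₂⟩ := ihV hx.2
    rcases le_total δ₁.edges.length δ₂.edges.length with hl | hl
    · refine ⟨δ₂, T₁ ++ T₂, h₂, ?_, ?_⟩
      · intro ν hν
        rcases List.mem_append.mp hν with hν | hν
        · exact hT₁ ν hν
        · exact hT₂ ν hν
      · intro y hy
        have hp1 : Pref δ₁ y := pref_trans (pref_comp h₁ h₂ hl) hy.1
        constructor
        · exact hs₁ ⟨hp1, fun ν hν => hy.2 ν (List.mem_append.mpr (Or.inl hν))⟩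
        · exact hs₂ ⟨hy.1, fun ν hν => hy.2 ν (List.mem_append.mpr (Or.inr hν))⟩
    · refine ⟨δ₁, T₁ ++ T₂, h₁, ?_, ?_⟩
      · intro ν hν
        rcases List.mem_append.mp hν with hν | hν
        · exact hT₁ ν hν
        · exact hT₂ ν hν
      · intro y hy
        have hp2 : Pref δ₂ y := pref_trans (pref_comp h₂ h₁ hl) hy.1
        constructor
        · exact hs₁ ⟨hy.1, fun ν hν => hy.2 ν (List.mem_append.mpr (Or.inl hν))⟩
        · exact hs₂ ⟨hp2, fun ν hν => hy.2 ν (List.mem_append.mpr (Or.inr hν))⟩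
  | sUnion S hS ih =>
    intro hx
    obtain ⟨s, hs, hxs⟩ := hx
    obtain ⟨δ, T, h1, h2, h3⟩ := ih s hs hxs
    exact ⟨δ, T, h1, h2, h3.trans (Set.subset_sUnion_of_mem hs)⟩

theorem mem_closure_pt {s : Set (PathSp G)} {x : PathSp G} :
    x ∈ @closure (PathSp G) (pathTop G) s ↔
      ∀ o : Set (PathSp G), TopologicalSpace.GenerateOpen
        (Set.range (Dset G) ∪ Set.range fun α => (Dset G α)ᶜ) o →
        x ∈ o → (o ∩ s).Nonempty :=
  @mem_closure_iff (PathSp G) (pathTop G) _ _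

theorem reach_all {v : G.V} (z : InfPath G) (N : ℕ)
    (h : ∀ i, N ≤ i → Reach G (G.rng (z.seq i)) v) :
    ∀ i, Reach G (G.rng (z.seq i)) v := by
  intro i
  rcases le_or_gt N i with hi | hi
  · exact h i hi
  · obtain ⟨β, hβs, hβr⟩ := h N le_rfl
    have hfst : Valid G (G.src (z.seq (i + 1))) (seg z (i + 1) (N - i)) :=
      (seg_spec z (i + 1) (N - i)).1
    have hβ' : β.start = FinPath.rngF ⟨G.src (z.seq (i + 1)), seg z (i + 1) (N - i), hfst⟩ := by
      show β.start = rngTo G (G.src (z.seq (i + 1))) (seg z (i + 1) (N - i))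
      rw [(seg_spec z (i + 1) (N - i)).2,
        show i + 1 + (N - i) = N + 1 from by omega, hβs]
      exact (z.valid N).symm
    refine ⟨FinPath.concat ⟨G.src (z.seq (i + 1)), seg z (i + 1) (N - i), hfst⟩ β hβ', ?_, ?_⟩
    · show G.src (z.seq (i + 1)) = G.rng (z.seq i)
      exact z.valid i
    · rw [FinPath.rngF_concat]
      exact hβr

theorem lemM {v : G.V} {x y : PathSp G}
    (hx : x ∈ @closure (PathSp G) (pathTop G) (Cset G v))
    (p q : FinPath G)
    (hp : Pref p x) (hq : Pref q y) (hr : p.rngF = q.rngF)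
    (htail : ∀ i, nthEdge G x (p.edges.length + i) = nthEdge G y (q.edges.length + i))
    (T : List (FinPath G)) (hT : ∀ ν ∈ T, ¬ Pref ν y) :
    ∃ z : InfPath G, (Sum.inr z : PathSp G) ∈ Cset G v ∧ Pref q (Sum.inr z) ∧
      ∀ ν ∈ T, ¬ Pref ν (Sum.inr z) := by
  classical
  set ψ : FinPath G → FinPath G := fun ν => catP G p (diff G q ν) with hψdef
  set T' : List (FinPath G) :=
    T.filterMap (fun ν => if Pref q (Sum.inl ν) then some (ψ ν) else none) with hT'def
  have hψ : ∀ ν : FinPath G, Pref q (Sum.inl ν) →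
      (ψ ν).start = p.start ∧ (ψ ν).edges = p.edges ++ ν.edges.drop q.edges.length := by
    intro ν hν
    have hd : (diff G q ν).start = p.rngF := by
      show rngTo G ν.start (ν.edges.take q.edges.length) = p.rngF
      rw [take_pref hν]
      have hst : ν.start = q.start := hν.1
      rw [hst, hr]
      rfl
    simp only [hψdef, catP, dif_pos hd]
    exact ⟨rfl, rfl⟩
  have key : ∀ ν ∈ T, Pref q (Sum.inl ν) → Pref (ψ ν) x → Pref ν y := by
    intro ν hνT hν hμx
    obtain ⟨hst, hed⟩ := hψ ν hν
    refine ⟨?_, ?_⟩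
    · rw [hq.1]
      exact (hν.1 : ν.start = q.start).symm
    · intro i e he
      rcases lt_or_ge i q.edges.length with hi | hi
      · have hqi : q.edges[i]? = some (q.edges[i]'hi) := List.getElem?_eq_getElem hi
        have hνi := hν.2 i _ hqi
        have heq : e = q.edges[i]'hi := by
          rw [show nthEdge G (Sum.inl ν) i = ν.edges[i]? from rfl] at hνi
          rw [hνi] at he
          exact (Option.some.inj he).symm
        rw [heq]
        exact hq.2 i _ hqi
      · obtain ⟨j, rfl⟩ : ∃ j, i = q.edges.length + j := ⟨i - q.edges.length, by omega⟩
        have hμe : (ψ ν).edges[p.edges.length + j]? = some e := by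
          rw [hed, List.getElem?_append_right (by omega),
            show p.edges.length + j - p.edges.length = j from by omega,
            List.getElem?_drop]
          exact he
        have hx2 := hμx.2 _ _ hμe
        rw [htail j] at hx2
        exact hx2
  have hxW : x ∈ Sset p T' := by
    refine ⟨hp, ?_⟩
    intro μ hμ hμx
    rw [hT'def, List.mem_filterMap] at hμ
    obtain ⟨ν, hνT, hνeq⟩ := hμ
    by_cases hν : Pref q (Sum.inl ν)
    · rw [if_pos hν] at hνeq
      obtain rfl : ψ ν = μ := Option.some.inj hνeq
      exact hT ν hνT (key ν hνT hν hμx)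
    · rw [if_neg hν] at hνeq
      cases hνeq
  obtain ⟨x₀, hx₀W, hx₀C⟩ := mem_closure_pt.mp hx (Sset p T') (sset_open p T') hxW
  obtain ⟨z₀, rfl, hreach⟩ := hx₀C
  have hsrc : G.src (z₀.seq p.edges.length) = q.rngF := (pref_src hx₀W.1).trans hr
  set u : InfPath G := ⟨fun i => z₀.seq (p.edges.length + i),
    fun i => z₀.valid (p.edges.length + i)⟩ with hudef
  have hu : u.start = q.rngF := hsrc
  set z : InfPath G := q.concatInf u hu with hzdef
  have hzseq : ∀ j, z.seq (q.edges.length + j) = z₀.seq (p.edges.length + j) :=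
    fun j => concatInf_seq_ge q u hu j
  have hzq : Pref q (Sum.inr z) := by
    refine ⟨concatInf_start q u hu, fun i e he => ?_⟩
    have hi : i < q.edges.length := getElem?_lt he
    show some (z.seq i) = some e
    rw [concatInf_seq_lt q u hu i hi, ← List.getElem?_eq_getElem hi]
    exact he
  refine ⟨z, ⟨z, rfl, ?_⟩, hzq, ?_⟩
  · apply reach_all z q.edges.length
    intro i hi
    have h2 : z.seq i = z₀.seq (p.edges.length + (i - q.edges.length)) := by
      have := hzseq (i - q.edges.length)
      rwa [show q.edges.length + (i - q.edges.length) = i from by omega] at this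
    rw [h2]
    exact hreach _
  · intro ν hνT hνz
    rcases le_or_gt ν.edges.length q.edges.length with hl | hl
    · exact hT ν hνT (pref_trans (pref_comp hνz hzq hl) hq)
    · have hqν : Pref q (Sum.inl ν) := pref_comp hzq hνz (le_of_lt hl)
      have hψT' : ψ ν ∈ T' := by
        rw [hT'def, List.mem_filterMap]
        exact ⟨ν, hνT, by rw [if_pos hqν]⟩
      apply hx₀W.2 _ hψT'
      obtain ⟨hst, hed⟩ := hψ ν hqν
      refine ⟨?_, ?_⟩
      · show z₀.start = (ψ ν).start
        rw [hst]
        exact hx₀W.1.1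
      · intro i e he
        rw [hed] at he
        rcases lt_or_ge i p.edges.length with hi | hi
        · rw [List.getElem?_append_left hi] at he
          exact hx₀W.1.2 i e he
        · rw [List.getElem?_append_right hi, List.getElem?_drop] at he
          have h3 : z.seq (q.edges.length + (i - p.edges.length)) = e :=
            Option.some.inj (hνz.2 _ _ he)
          have h4 := hzseq (i - p.edges.length)
          show some (z₀.seq i) = some e
          rw [show i = p.edges.length + (i - p.edges.length) from by omega, ← h4, h3]

theorem loop_rigid {v : G.V} {α : FinPath G} (hloop : LoopAt G v α)
    (huniq : ∀ β : FinPath G, LoopAt G v β → β = α) :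
    ∀ (L : ℕ) (l : List G.Ed), l.length = L → Valid G v l → rngTo G v l = v →
      ∀ j, j < l.length → l[j]? = α.edges[j % α.edges.length]? := by
  have hn : 0 < α.edges.length := List.length_pos_iff.mpr hloop.1
  intro L
  induction L using Nat.strong_induction_on with
  | _ L ih =>
    intro l hlen hval hrng j hj
    have hL : 0 < l.length := by omega
    classical
    have hex : ∃ k, 0 < k ∧ k ≤ l.length ∧ rngTo G v (l.take k) = v :=
      ⟨l.length, hL, le_rfl, by rw [List.take_length]; exact hrng⟩
    obtain ⟨hk0, hkL, hkv⟩ := Nat.find_spec hex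
    set k := Nat.find hex with hkdef
    have hval_split := (valid_append G (l.take k) (l.drop k) v).mp
      (by rw [List.take_append_drop]; exact hval)
    have hlen_take : (l.take k).length = k := by
      rw [List.length_take]; omega
    have hlp : LoopAt G v ⟨v, l.take k, hval_split.1⟩ := by
      refine ⟨?_, rfl, hkv, ?_⟩
      · intro hnil
        have hnil' : l.take k = [] := hnil
        rw [hnil'] at hlen_take
        simp at hlen_take
        omega
      · intro i e hi he hrng_e
        have hi2 : i + 1 < (l.take k).length := hi
        have hik : i + 1 < k := by rwa [hlen_take] at hi2
        have he2 : (l.take k)[i]? = some e := he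
        have hle : l[i]? = some e := by
          rw [List.getElem?_take, if_pos (by omega)] at he2
          exact he2
        have hil : i < l.length := by omega
        have hei : e = l[i]'hil := by
          rw [List.getElem?_eq_getElem hil] at hle
          exact (Option.some.inj hle).symm
        have hrt : rngTo G v (l.take (i + 1)) = v := by
          rw [rngTo_take_succ l i hil, ← hei]
          exact hrng_e
        exact Nat.find_min hex hik ⟨by omega, by omega, hrt⟩
    have hlpα := huniq _ hlp
    have hke : l.take k = α.edges := by rw [← hlpα]
    have hkn : k = α.edges.length := by rw [← hke]; exact hlen_take.symm
    rcases lt_or_ge j α.edges.length with hj1 | hj1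
    · rw [Nat.mod_eq_of_lt hj1, ← hke, List.getElem?_take, if_pos (by omega)]
    · have hvd : Valid G v (l.drop k) := by
        have h2 := hval_split.2
        rwa [hkv] at h2
      have hrd : rngTo G v (l.drop k) = v := by
        have h2 : rngTo G v (l.take k ++ l.drop k) = v := by
          rw [List.take_append_drop]; exact hrng
        rwa [rngTo_append, hkv] at h2
      have hkj : k ≤ j := by omega
      have hih := ih (l.length - k) (by omega) (l.drop k) List.length_drop
        hvd hrd (j - k) (by rw [List.length_drop]; omega)
      rw [List.getElem?_drop, show k + (j - k) = j from by omega] at hih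
      rw [hih]
      congr 1
      conv_rhs => rw [show j = α.edges.length + (j - α.edges.length) from by omega]
      rw [Nat.add_mod_left, hkn]

theorem gamma_exists {v : G.V} {α : FinPath G} (hloop : LoopAt G v α) :
    ∃ γ : InfPath G, γ.start = v ∧
      ∀ i, γ.seq i = α.edges[i % α.edges.length]'(Nat.mod_lt i (List.length_pos_iff.mpr hloop.1)) := by
  have hn : 0 < α.edges.length := List.length_pos_iff.mpr hloop.1
  have hmod : ∀ i : ℕ, (i + 1) % α.edges.length = (i % α.edges.length + 1) % α.edges.length := by
    intro i
    conv_lhs => rw [← Nat.mod_add_div i α.edges.length]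
    rw [Nat.add_right_comm, Nat.add_mul_mod_self_left]
  refine ⟨⟨fun i => α.edges[i % α.edges.length]'(Nat.mod_lt i hn), ?_⟩, ?_, fun i => rfl⟩
  · intro i
    rcases lt_or_ge (i % α.edges.length + 1) α.edges.length with h1 | h1
    · have h2 : (i + 1) % α.edges.length = i % α.edges.length + 1 := by
        rw [hmod, Nat.mod_eq_of_lt h1]
      simp only [h2]
      exact valid_get α.valid _ h1
    · have h3 : i % α.edges.length + 1 = α.edges.length := by
        have := Nat.mod_lt i hn
        omega
      have h2 : (i + 1) % α.edges.length = 0 := by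
        rw [hmod, h3, Nat.mod_self]
      have hs : G.src (α.edges[0]'hn) = v := by
        have := valid_head α.valid hn
        rwa [hloop.2.1] at this
      have hr : G.rng (α.edges[i % α.edges.length]'(Nat.mod_lt i hn)) = v := by
        have h5 := rngTo_take_succ (v := α.start) α.edges (α.edges.length - 1) (by omega)
        rw [show α.edges.length - 1 + 1 = α.edges.length from by omega,
          List.take_length] at h5
        have h6 : i % α.edges.length = α.edges.length - 1 := by omega
        simp only [h6]
        rw [← h5]
        exact hloop.2.2.1
      simp only [h2]
      rw [hs, hr]
  · show G.src (α.edges[0 % α.edges.length]'(Nat.mod_lt 0 hn)) = v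
    simp only [Nat.zero_mod]
    have := valid_head α.valid hn
    rwa [hloop.2.1] at this

theorem c_start_forced {v : G.V} {α : FinPath G} (hloop : LoopAt G v α)
    (huniq : ∀ β : FinPath G, LoopAt G v β → β = α) (z : InfPath G)
    (hzs : z.start = v) (hreach : ∀ i, Reach G (G.rng (z.seq i)) v) :
    ∀ i, z.seq i = α.edges[i % α.edges.length]'(Nat.mod_lt i (List.length_pos_iff.mpr hloop.1)) := by
  have hn : 0 < α.edges.length := List.length_pos_iff.mpr hloop.1
  intro i
  obtain ⟨β, hβs, hβr⟩ := hreach i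
  have hv1 : Valid G v (seg z 0 (i + 1)) := by
    have h1 := (seg_spec z 0 (i + 1)).1
    rwa [show G.src (z.seq 0) = v from hzs] at h1
  have hrt : rngTo G v (seg z 0 (i + 1)) = G.src (z.seq (i + 1)) := by
    have h1 := (seg_spec z 0 (i + 1)).2
    rw [show G.src (z.seq 0) = v from hzs] at h1
    rwa [show (0 : ℕ) + (i + 1) = i + 1 from by omega] at h1
  have hβs' : β.start = G.src (z.seq (i + 1)) := by
    rw [hβs]
    exact (z.valid i).symm
  have hvl : Valid G v (seg z 0 (i + 1) ++ β.edges) := by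
    rw [valid_append]
    refine ⟨hv1, ?_⟩
    rw [hrt, ← hβs']
    exact β.valid
  have hrl : rngTo G v (seg z 0 (i + 1) ++ β.edges) = v := by
    rw [rngTo_append, hrt, ← hβs']
    exact hβr
  have hjlen : i < (seg z 0 (i + 1) ++ β.edges).length := by
    rw [List.length_append, seg_length]
    omega
  have hmain := loop_rigid hloop huniq (seg z 0 (i + 1) ++ β.edges).length
    (seg z 0 (i + 1) ++ β.edges) rfl hvl hrl i hjlen
  have hli : (seg z 0 (i + 1) ++ β.edges)[i]? = some (z.seq i) := by
    rw [List.getElem?_append_left (by rw [seg_length]; omega),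
      seg_getElem? z 0 (i + 1) i (by omega)]
    simp
  rw [hli, List.getElem?_eq_getElem (Nat.mod_lt i hn)] at hmain
  exact Option.some.inj hmain
/-- Let `v` be a vertex at which exactly one loop `α` is based, let
`C = {z ∈ Z : ∀ i, ∃ path from r(z_i) to v}`, and let `F` be the closure of `C` in `X`
(i.e. `X ∩ closure C`). Then `F` is invariant under tail equivalence, and every `x ∈ F`
with `s(x) = v` equals the infinite path `γ = ααα⋯`. -/
theorem unique_loop_closure (G : Graph) [Countable G.V] [Countable G.Ed]
    (hns : ∀ v : G.V, ∃ e : G.Ed, G.src e = v)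
    (v : G.V) (α : FinPath G)
    (hloop : LoopAt G v α) (huniq : ∀ β : FinPath G, LoopAt G v β → β = α) :
    InvariantS G (Xset G ∩ @closure (PathSp G) (pathTop G) (Cset G v)) ∧
    ∀ x ∈ Xset G ∩ @closure (PathSp G) (pathTop G) (Cset G v),
      startOf G x = v →
        ∃ w : InfPath G, x = Sum.inr w ∧
          ∀ i : ℕ, α.edges[i % α.edges.length]? = some (w.seq i) := by
  have hn : 0 < α.edges.length := List.length_pos_iff.mpr hloop.1
  constructor
  · rintro x ⟨hxX, hxC⟩ y hxy
    rcases hxy with ⟨a, b, γ, h₁, h₂, rfl, rfl⟩ | ⟨a, b, u, h₁, h₂, rfl, rfl⟩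
    · constructor
      · show Vinf G (b.concat γ h₂).rngF
        rw [FinPath.rngF_concat]
        have hx2 : Vinf G (a.concat γ h₁).rngF := hxX
        rw [FinPath.rngF_concat] at hx2
        exact hx2
      · apply mem_closure_pt.mpr
        intro U hU hyU
        obtain ⟨δ, T, hδ, hT, hsub⟩ := nhds_basis hU hyU
        have hr : (a.concat γ h₁).rngF = (b.concat γ h₂).rngF := by
          rw [FinPath.rngF_concat, FinPath.rngF_concat]
        have htail : ∀ i,
            nthEdge G (Sum.inl (a.concat γ h₁)) ((a.concat γ h₁).edges.length + i)
              = nthEdge G (Sum.inl (b.concat γ h₂)) ((b.concat γ h₂).edges.length + i) := by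
          intro i
          show (a.concat γ h₁).edges[(a.concat γ h₁).edges.length + i]?
              = (b.concat γ h₂).edges[(b.concat γ h₂).edges.length + i]?
          rw [List.getElem?_eq_none (by omega), List.getElem?_eq_none (by omega)]
        obtain ⟨z, hzC, hzq, hzT⟩ := lemM hxC _ _ (pref_refl _) (pref_refl _) hr htail T hT
        exact ⟨Sum.inr z, hsub ⟨pref_trans hδ hzq, hzT⟩, hzC⟩
    · refine ⟨trivial, ?_⟩
      apply mem_closure_pt.mpr
      intro U hU hyU
      obtain ⟨δ, T, hδ, hT, hsub⟩ := nhds_basis hU hyU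
      obtain ⟨j, hj⟩ : ∃ j, max δ.edges.length b.edges.length = b.edges.length + j :=
        ⟨max δ.edges.length b.edges.length - b.edges.length, by omega⟩
      have hδk : δ.edges.length ≤ b.edges.length + j := by
        rw [← hj]; exact le_max_left _ _
      have hp : Pref (wPref (a.concatInf u h₁) (a.edges.length + j))
          (Sum.inr (a.concatInf u h₁)) := pref_wPref _ _
      have hq : Pref (wPref (b.concatInf u h₂) (b.edges.length + j))
          (Sum.inr (b.concatInf u h₂)) := pref_wPref _ _
      have hr : (wPref (a.concatInf u h₁) (a.edges.length + j)).rngF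
          = (wPref (b.concatInf u h₂) (b.edges.length + j)).rngF := by
        rw [wPref_rngF, wPref_rngF, concatInf_seq_ge a u h₁ j, concatInf_seq_ge b u h₂ j]
      have htail : ∀ i,
          nthEdge G (Sum.inr (a.concatInf u h₁))
              ((wPref (a.concatInf u h₁) (a.edges.length + j)).edges.length + i)
            = nthEdge G (Sum.inr (b.concatInf u h₂))
              ((wPref (b.concatInf u h₂) (b.edges.length + j)).edges.length + i) := by
        intro i
        show some ((a.concatInf u h₁).seq
            ((wPref (a.concatInf u h₁) (a.edges.length + j)).edges.length + i))
          = some ((b.concatInf u h₂).seq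
            ((wPref (b.concatInf u h₂) (b.edges.length + j)).edges.length + i))
        rw [wPref_len, wPref_len,
          show a.edges.length + j + i = a.edges.length + (j + i) from by omega,
          show b.edges.length + j + i = b.edges.length + (j + i) from by omega,
          concatInf_seq_ge, concatInf_seq_ge]
      obtain ⟨z, hzC, hzq, hzT⟩ := lemM hxC _ _ hp hq hr htail T hT
      have hδq : Pref δ (Sum.inl (wPref (b.concatInf u h₂) (b.edges.length + j))) :=
        pref_comp hδ hq (by rw [wPref_len]; exact hδk)
      exact ⟨Sum.inr z, hsub ⟨pref_trans hδq hzq, hzT⟩, hzC⟩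
  · rintro x ⟨hxX, hxC⟩ hxv
    obtain ⟨γ, hγs, hγe⟩ := gamma_exists hloop
    cases x with
    | inl β =>
      exfalso
      have hβv : β.start = v := hxv
      obtain ⟨x₀, hx₀S, hx₀C⟩ := mem_closure_pt.mp hxC (Sset β []) (sset_open β [])
        ⟨pref_refl β, fun ν hν => absurd hν List.not_mem_nil⟩
      obtain ⟨z₁, rfl, hreach₁⟩ := hx₀C
      have hz₁s : z₁.start = v := by
        have hh : z₁.start = β.start := hx₀S.1.1
        rw [hh, hβv]
      have hpat₁ := c_start_forced hloop huniq z₁ hz₁s hreach₁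
      have hβed : ∀ (i : ℕ) (hi : i < β.edges.length), β.edges[i]'hi = γ.seq i := by
        intro i hi
        have hh : nthEdge G (Sum.inr z₁) i = some (β.edges[i]'hi) :=
          hx₀S.1.2 i _ (List.getElem?_eq_getElem hi)
        have hh2 : z₁.seq i = β.edges[i]'hi := Option.some.inj hh
        rw [← hh2, hpat₁ i, hγe i]
      have hval_ext : Valid G β.start (β.edges ++ [γ.seq β.edges.length]) := by
        rw [valid_append]
        refine ⟨β.valid, ?_⟩
        have hβγ : β.edges = seg γ 0 β.edges.length := by
          apply List.ext_getElem?
          intro i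
          rcases lt_or_ge i β.edges.length with hi | hi
          · rw [seg_getElem? γ 0 _ i hi, List.getElem?_eq_getElem hi, hβed i hi]
            simp
          · rw [List.getElem?_eq_none hi,
              List.getElem?_eq_none (by rw [seg_length]; omega)]
        have h7 := (seg_spec γ 0 β.edges.length).2
        rw [← hβγ] at h7
        have h8 : G.src (γ.seq 0) = β.start := by
          rw [show G.src (γ.seq 0) = γ.start from rfl, hγs, ← hβv]
        rw [h8] at h7
        rw [h7]
        constructor
        · simp
        · trivial
      have hmem : (Sum.inl β : PathSp G) ∈
          Sset β [⟨β.start, β.edges ++ [γ.seq β.edges.length], hval_ext⟩] := by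
        refine ⟨pref_refl β, ?_⟩
        intro ν hν
        rcases List.mem_singleton.mp hν with rfl
        intro hpr
        have hh := hpr.2 β.edges.length (γ.seq β.edges.length) (by
          show (β.edges ++ [γ.seq β.edges.length])[β.edges.length]? = _
          rw [List.getElem?_append_right le_rfl]
          simp)
        have hh2 : β.edges[β.edges.length]? = some (γ.seq β.edges.length) := hh
        rw [List.getElem?_eq_none le_rfl] at hh2
        cases hh2
      obtain ⟨x₁, hx₁S, hx₁C⟩ := mem_closure_pt.mp hxC _ (sset_open _ _) hmem
      obtain ⟨z₂, rfl, hreach₂⟩ := hx₁C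
      have hz₂s : z₂.start = v := by
        have hh : z₂.start = β.start := hx₁S.1.1
        rw [hh, hβv]
      have hpat₂ := c_start_forced hloop huniq z₂ hz₂s hreach₂
      apply hx₁S.2 _ (List.mem_singleton.mpr rfl)
      refine ⟨?_, ?_⟩
      · show z₂.start = β.start
        exact hx₁S.1.1
      · intro i e he
        have he2 : (β.edges ++ [γ.seq β.edges.length])[i]? = some e := he
        show some (z₂.seq i) = some e
        have hz2i : z₂.seq i = γ.seq i := by rw [hpat₂ i, hγe i]
        rw [hz2i]
        rcases lt_or_ge i β.edges.length with hi | hi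
        · rw [List.getElem?_append_left hi, List.getElem?_eq_getElem hi] at he2
          exact congrArg some ((hβed i hi).symm.trans (Option.some.inj he2))
        · have hik : i = β.edges.length := by
            by_contra hne
            rw [List.getElem?_eq_none (by simp; omega)] at he2
            cases he2
          subst hik
          rw [List.getElem?_append_right le_rfl] at he2
          simp at he2
          rw [he2]
    | inr w =>
      refine ⟨w, rfl, ?_⟩
      intro i
      have hwv : w.start = v := hxv
      obtain ⟨x₀, hx₀S, hx₀C⟩ := mem_closure_pt.mp hxC (Sset (wPref w (i + 1)) [])
        (sset_open _ _) ⟨pref_wPref w (i + 1), fun ν hν => absurd hν List.not_mem_nil⟩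
      obtain ⟨z₁, rfl, hreach₁⟩ := hx₀C
      have hz₁s : z₁.start = v := by
        have hh : z₁.start = (wPref w (i + 1)).start := hx₀S.1.1
        rw [hh]
        exact hwv
      have hpat := c_start_forced hloop huniq z₁ hz₁s hreach₁
      have hwi : z₁.seq i = w.seq i := by
        have hh : nthEdge G (Sum.inr z₁) i = some (w.seq i) := by
          apply hx₀S.1.2
          show (seg w 0 (i + 1))[i]? = some (w.seq i)
          rw [seg_getElem? w 0 (i + 1) i (by omega)]
          simp
        exact Option.some.inj hh
      rw [List.getElem?_eq_getElem (Nat.mod_lt i hn)]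
      exact congrArg some ((hpat i).symm.trans hwi)

end GraphCstar
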